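/- Let X be an approximate subring of a ring, R := ⟨X⟩ the subring it generates, and let f : R → S be a locally compact model of X. Then for every neighborhood U of 0 in S whose closure is compact, the set f⁻¹[U] is additively commensurable with X, i.e. finitely many additive translates of f⁻¹[U] cover X and finitely many additive translates of X cover f⁻¹[U]. -/

import Mathlib

open Pointwise

/-- A subset of a (not necessarily unital or commutative) ring is additively symmetric
if it contains `0` and `-X = X`. -/
def AddSymmetric {R : Type*} [NonUnitalRing R] (X : Set R) : Prop :=
  (0 : R) ∈ X ∧ -X = X

/-- `X` is an approximate subring if it is additively symmetric and
`X·X ∪ (X+X) ⊆ F + X` for some finite subset `F` of the subring generated by `X`. -/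
def IsApproxSubring {R : Type*} [NonUnitalRing R] (X : Set R) : Prop :=
  AddSymmetric X ∧ ∃ F : Set R, F.Finite ∧ F ⊆ (NonUnitalSubring.closure X : Set R) ∧
    X * X ∪ (X + X) ⊆ F + X

/-- The sequence `X_0 := X`, `X_{n+1} := X_n·X_n + (X_n + X_n)`. -/
def XSeq {R : Type*} [NonUnitalRing R] (X : Set R) : ℕ → Set R
  | 0 => X
  | n + 1 => XSeq X n * XSeq X n + (XSeq X n + XSeq X n)


section CommAux
variable {R : Type*} [NonUnitalRing R]

/-- `A` is covered by finitely many additive translates of `X`. -/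
def CommX (X A : Set R) : Prop := ∃ F : Set R, F.Finite ∧ A ⊆ F + X

lemma commX_mono {X A B : Set R} (h : A ⊆ B) (hB : CommX X B) : CommX X A :=
  let ⟨F, hF, hs⟩ := hB; ⟨F, hF, h.trans hs⟩

lemma commX_of_finite {X A : Set R} (h0 : (0:R) ∈ X) (hA : A.Finite) : CommX X A :=
  ⟨A, hA, fun a ha => ⟨a, ha, 0, h0, add_zero a⟩⟩

lemma commX_empty {X : Set R} : CommX X ∅ := ⟨∅, Set.finite_empty, Set.empty_subset _⟩

lemma commX_union {X A B : Set R} (hA : CommX X A) (hB : CommX X B) : CommX X (A ∪ B) := by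
  obtain ⟨F, hF, hFs⟩ := hA
  obtain ⟨G, hG, hGs⟩ := hB
  refine ⟨F ∪ G, hF.union hG, Set.union_subset ?_ ?_⟩
  · exact hFs.trans (Set.add_subset_add_right Set.subset_union_left)
  · exact hGs.trans (Set.add_subset_add_right Set.subset_union_right)

lemma commX_add {X A B F₀ : Set R} (hF₀ : F₀.Finite) (hXX : X + X ⊆ F₀ + X)
    (hA : CommX X A) (hB : CommX X B) : CommX X (A + B) := by
  obtain ⟨F, hF, hFs⟩ := hA
  obtain ⟨G, hG, hGs⟩ := hB
  refine ⟨F + G + F₀, (hF.add hG).add hF₀, ?_⟩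
  rintro c hc
  obtain ⟨a, ha, b, hb, rfl⟩ := Set.mem_add.1 hc
  obtain ⟨fa, hfa, x, hx, rfl⟩ := Set.mem_add.1 (hFs ha)
  obtain ⟨g, hg, y, hy, rfl⟩ := Set.mem_add.1 (hGs hb)
  obtain ⟨f₀, hf₀, x', hx', hxy⟩ := Set.mem_add.1 (hXX (Set.add_mem_add hx hy))
  refine Set.mem_add.2 ⟨fa + g + f₀, Set.add_mem_add (Set.add_mem_add hfa hg) hf₀, x', hx', ?_⟩
  rw [show fa + g + f₀ + x' = fa + g + (f₀ + x') from by abel, hxy]; abel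

lemma commX_neg {X A : Set R} (hneg : -X = X) (hA : CommX X A) : CommX X (-A) := by
  obtain ⟨F, hF, hFs⟩ := hA
  refine ⟨-F, hF.neg, ?_⟩
  rintro c hc
  obtain ⟨fa, hfa, x, hx, hfx⟩ := Set.mem_add.1 (hFs (Set.mem_neg.1 hc))
  refine Set.mem_add.2 ⟨-fa, Set.neg_mem_neg.2 hfa, -x, ?_, ?_⟩
  · rw [← hneg]; exact Set.neg_mem_neg.2 hx
  · rw [← neg_add, hfx, neg_neg]

/-- Commensurability of one-element left/right dilates of `X`. -/
lemma commX_single_mul {X : Set R} (h0 : (0:R) ∈ X) (hneg : -X = X)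
    {F₀ : Set R} (hF₀ : F₀.Finite) (hXX : X * X ⊆ F₀ + X) (hXA : X + X ⊆ F₀ + X)
    (hgen : NonUnitalSubring.closure X = ⊤) (a : R) :
    CommX X ({a} * X) ∧ CommX X (X * {a}) := by
  have ha : a ∈ NonUnitalSubring.closure X := by rw [hgen]; trivial
  induction ha using NonUnitalSubring.closure_induction with
  | mem x hx =>
    constructor
    · exact commX_mono (Set.mul_subset_mul_right (Set.singleton_subset_iff.2 hx))
        ⟨F₀, hF₀, hXX⟩
    · exact commX_mono (Set.mul_subset_mul_left (Set.singleton_subset_iff.2 hx))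
        ⟨F₀, hF₀, hXX⟩
  | zero =>
    have h : ∀ B : Set R, ({(0:R)} * B) ⊆ {0} + X := by
      rintro B c hc
      obtain ⟨z, hz, y, hy, rfl⟩ := Set.mem_mul.1 hc
      rw [Set.mem_singleton_iff] at hz; subst hz
      exact Set.mem_add.2 ⟨0, rfl, 0, h0, by rw [zero_mul, add_zero]⟩
    have h' : (X * {(0:R)}) ⊆ {0} + X := by
      rintro c hc
      obtain ⟨z, hz, y, hy, rfl⟩ := Set.mem_mul.1 hc
      rw [Set.mem_singleton_iff] at hy; subst hy
      exact Set.mem_add.2 ⟨0, rfl, 0, h0, by rw [mul_zero, add_zero]⟩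
    exact ⟨⟨{0}, Set.finite_singleton _, h X⟩, ⟨{0}, Set.finite_singleton _, h'⟩⟩
  | add x y hx hy ihx ihy =>
    constructor
    · refine commX_mono ?_ (commX_add hF₀ hXA ihx.1 ihy.1)
      rintro c hc
      obtain ⟨z, hz, w, hw, rfl⟩ := Set.mem_mul.1 hc
      rw [Set.mem_singleton_iff] at hz; subst hz
      rw [add_mul]
      exact Set.add_mem_add (Set.mul_mem_mul rfl hw) (Set.mul_mem_mul rfl hw)
    · refine commX_mono ?_ (commX_add hF₀ hXA ihx.2 ihy.2)
      rintro c hc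
      obtain ⟨z, hz, w, hw, rfl⟩ := Set.mem_mul.1 hc
      rw [Set.mem_singleton_iff] at hw; subst hw
      rw [mul_add]
      exact Set.add_mem_add (Set.mul_mem_mul hz rfl) (Set.mul_mem_mul hz rfl)
  | neg x hx ihx =>
    constructor
    · refine commX_mono ?_ (commX_neg hneg ihx.1)
      rintro c hc
      obtain ⟨z, hz, w, hw, rfl⟩ := Set.mem_mul.1 hc
      rw [Set.mem_singleton_iff] at hz; subst hz
      rw [neg_mul]
      exact Set.neg_mem_neg.2 (Set.mul_mem_mul rfl hw)
    · refine commX_mono ?_ (commX_neg hneg ihx.2)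
      rintro c hc
      obtain ⟨z, hz, w, hw, rfl⟩ := Set.mem_mul.1 hc
      rw [Set.mem_singleton_iff] at hw; subst hw
      rw [mul_neg]
      exact Set.neg_mem_neg.2 (Set.mul_mem_mul hz rfl)
  | mul x y hx hy ihx ihy =>
    constructor
    · obtain ⟨G, hG, hGs⟩ := ihy.1
      refine commX_mono ?_ (commX_add hF₀ hXA
        (commX_of_finite h0 ((Set.finite_singleton x).mul hG)) ihx.1)
      rintro c hc
      obtain ⟨z, hz, w, hw, rfl⟩ := Set.mem_mul.1 hc
      rw [Set.mem_singleton_iff] at hz; subst hz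
      have : y * w ∈ G + X := hGs (Set.mul_mem_mul rfl hw)
      obtain ⟨g, hg, u, hu, hgu⟩ := Set.mem_add.1 this
      rw [mul_assoc, ← hgu, mul_add]
      exact Set.add_mem_add (Set.mul_mem_mul rfl hg) (Set.mul_mem_mul rfl hu)
    · obtain ⟨G, hG, hGs⟩ := ihx.2
      refine commX_mono ?_ (commX_add hF₀ hXA
        (commX_of_finite h0 (hG.mul (Set.finite_singleton y))) ihy.2)
      rintro c hc
      obtain ⟨z, hz, w, hw, rfl⟩ := Set.mem_mul.1 hc
      rw [Set.mem_singleton_iff] at hw; subst hw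
      have : z * x ∈ G + X := hGs (Set.mul_mem_mul hz rfl)
      obtain ⟨g, hg, u, hu, hgu⟩ := Set.mem_add.1 this
      rw [← mul_assoc, ← hgu, add_mul]
      exact Set.add_mem_add (Set.mul_mem_mul hg rfl) (Set.mul_mem_mul hu rfl)

lemma commX_finite_mul_X {X : Set R} (h0 : (0:R) ∈ X) (hneg : -X = X)
    {F₀ : Set R} (hF₀ : F₀.Finite) (hXX : X * X ⊆ F₀ + X) (hXA : X + X ⊆ F₀ + X)
    (hgen : NonUnitalSubring.closure X = ⊤) {F : Set R} (hF : F.Finite) :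
    CommX X (F * X) ∧ CommX X (X * F) := by
  refine Set.Finite.induction_on (motive := fun s _ => CommX X (s * X) ∧ CommX X (X * s)) F hF ?_ ?_
  · simp only [Set.empty_mul, Set.mul_empty]; exact ⟨commX_empty, commX_empty⟩
  · intro a s _ _ ih
    rw [Set.insert_eq, Set.union_mul, Set.mul_union]
    obtain ⟨h1, h2⟩ := commX_single_mul h0 hneg hF₀ hXX hXA hgen a
    exact ⟨commX_union h1 ih.1, commX_union h2 ih.2⟩

lemma commX_mul {X : Set R} (h0 : (0:R) ∈ X) (hneg : -X = X)
    {F₀ : Set R} (hF₀ : F₀.Finite) (hXX : X * X ⊆ F₀ + X) (hXA : X + X ⊆ F₀ + X)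
    (hgen : NonUnitalSubring.closure X = ⊤) {A B : Set R}
    (hA : CommX X A) (hB : CommX X B) : CommX X (A * B) := by
  obtain ⟨F, hF, hFs⟩ := hA
  obtain ⟨G, hG, hGs⟩ := hB
  have key : A * B ⊆ F * G + F * X + X * G + X * X := by
    rintro c hc
    obtain ⟨a, ha, b, hb, rfl⟩ := Set.mem_mul.1 hc
    obtain ⟨fa, hfa, x, hx, rfl⟩ := Set.mem_add.1 (hFs ha)
    obtain ⟨g, hg, y, hy, rfl⟩ := Set.mem_add.1 (hGs hb)
    have : (fa + x) * (g + y) = fa * g + fa * y + x * g + x * y := by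
      rw [add_mul, mul_add, mul_add]; abel
    rw [this]
    exact Set.add_mem_add (Set.add_mem_add
      (Set.add_mem_add (Set.mul_mem_mul hfa hg) (Set.mul_mem_mul hfa hy))
      (Set.mul_mem_mul hx hg)) (Set.mul_mem_mul hx hy)
  refine commX_mono key ?_
  exact commX_add hF₀ hXA (commX_add hF₀ hXA
    (commX_add hF₀ hXA (commX_of_finite h0 (hF.mul hG))
      (commX_finite_mul_X h0 hneg hF₀ hXX hXA hgen hF).1)
    (commX_finite_mul_X h0 hneg hF₀ hXX hXA hgen hG).2) ⟨F₀, hF₀, hXX⟩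

end CommAux

lemma commX_XSeq {R : Type*} [NonUnitalRing R] {X : Set R} (h0 : (0:R) ∈ X) (hneg : -X = X)
    {F₀ : Set R} (hF₀ : F₀.Finite) (hXX : X * X ⊆ F₀ + X) (hXA : X + X ⊆ F₀ + X)
    (hgen : NonUnitalSubring.closure X = ⊤) : ∀ n, CommX X (XSeq X n)
  | 0 => ⟨{0}, Set.finite_singleton _, fun x hx => Set.mem_add.2 ⟨0, rfl, x, hx, zero_add x⟩⟩
  | (n+1) => by
    have ih := commX_XSeq h0 hneg hF₀ hXX hXA hgen n
    exact commX_add hF₀ hXA (commX_mul h0 hneg hF₀ hXX hXA hgen ih ih)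
      (commX_add hF₀ hXA ih ih)

/-- Let `X` be an approximate subring generating the ring `R`, and let `f : R →ₙ+* S`
be a locally compact model of `X`. Then for every neighborhood `U` of `0` in `S` with
compact closure, `f⁻¹[U]` is additively commensurable with `X`. -/
theorem locally_compact_ring_model_preimage_commensurable
    {R S : Type*} [NonUnitalRing R] [NonUnitalRing S] [TopologicalSpace S]
    [IsTopologicalRing S] [LocallyCompactSpace S] [T2Space S]
    (X : Set R) (hX : IsApproxSubring X) (hgen : NonUnitalSubring.closure X = ⊤)
    (f : R →ₙ+* S) (hcomp : IsCompact (closure (⇑f '' X)))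
    (hmodel : ∃ V ∈ nhds (0 : S), ∃ m : ℕ, ⇑f ⁻¹' V ⊆ XSeq X m)
    (U : Set S) (hU : U ∈ nhds (0 : S)) (hUc : IsCompact (closure U)) :
    (∃ F : Set R, F.Finite ∧ X ⊆ F + ⇑f ⁻¹' U) ∧
      (∃ F : Set R, F.Finite ∧ ⇑f ⁻¹' U ⊆ F + X) := by
  classical
  obtain ⟨⟨h0, hneg⟩, F₀, hF₀fin, -, hF₀⟩ := hX
  have hXX : X * X ⊆ F₀ + X := (Set.subset_union_left).trans hF₀
  have hXA : X + X ⊆ F₀ + X := (Set.subset_union_right).trans hF₀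
  constructor
  · -- finitely many translates of f⁻¹ U cover X
    set W := interior U with hW
    have hWopen : IsOpen W := isOpen_interior
    have hW0 : (0:S) ∈ W := mem_interior_iff_mem_nhds.2 hU
    have hcover : closure (⇑f '' X) ⊆ ⋃ i : X, (fun y => y - f i) ⁻¹' W := by
      intro y hy
      have hopen : IsOpen {a : S | y - a ∈ W} :=
        hWopen.preimage (continuous_const.sub continuous_id)
      have hyin : y ∈ {a : S | y - a ∈ W} := by simp [hW0]
      obtain ⟨a, haW, haX⟩ := mem_closure_iff.1 hy _ hopen hyin
      obtain ⟨x, hx, rfl⟩ := haX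
      exact Set.mem_iUnion.2 ⟨⟨x, hx⟩, haW⟩
    obtain ⟨t, ht⟩ := hcomp.elim_finite_subcover _
      (fun i : X => hWopen.preimage (continuous_id.sub continuous_const)) hcover
    refine ⟨(fun i : X => (i : R)) '' ↑t, (t.finite_toSet.image _), ?_⟩
    intro x hx
    have : f x ∈ closure (⇑f '' X) := subset_closure ⟨x, hx, rfl⟩
    obtain ⟨i, hit, hiW⟩ := Set.mem_iUnion₂.1 (ht this)
    refine Set.mem_add.2 ⟨(i : R), ⟨i, hit, rfl⟩, x - i, ?_, by abel⟩
    show f (x - (i:R)) ∈ U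
    rw [map_sub]
    exact interior_subset hiW
  · -- finitely many translates of X cover f⁻¹ U
    obtain ⟨V, hV, m, hVm⟩ := hmodel
    obtain ⟨W₁, hW₁, hW₁add⟩ := exists_nhds_zero_half hV
    set W₂ := W₁ ∩ -W₁ with hW₂def
    have hW₂ : W₂ ∈ nhds (0:S) := Filter.inter_mem hW₁ (neg_mem_nhds_zero S hW₁)
    have hW₂sub : ∀ a ∈ W₂, ∀ b ∈ W₂, a - b ∈ V := by
      intro a ha b hb
      rw [sub_eq_add_neg]
      exact hW₁add a ha.1 (-b) (Set.mem_neg.1 hb.2)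
    have hcover : closure U ⊆ ⋃ s : S, (fun y => y - s) ⁻¹' (interior W₂) := by
      intro y _
      exact Set.mem_iUnion.2 ⟨y, by simp [mem_interior_iff_mem_nhds.2 hW₂]⟩
    obtain ⟨t, ht⟩ := hUc.elim_finite_subcover _
      (fun s : S => isOpen_interior.preimage (continuous_id.sub continuous_const)) hcover
    set g : S → R := fun s => if h : ∃ r : R, f r - s ∈ W₂ then h.choose else 0 with hg
    obtain ⟨Fm, hFmfin, hFm⟩ := commX_XSeq h0 hneg hF₀fin hXX hXA hgen m
    refine ⟨g '' ↑t + Fm, (t.finite_toSet.image g).add hFmfin, ?_⟩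
    intro u hu
    have : f u ∈ closure U := subset_closure hu
    obtain ⟨s, hst, hsW⟩ := Set.mem_iUnion₂.1 (ht this)
    have hex : ∃ r : R, f r - s ∈ W₂ := ⟨u, interior_subset hsW⟩
    have hgs : f (g s) - s ∈ W₂ := by
      rw [hg]; simp only [dif_pos hex]; exact hex.choose_spec
    have hdiff : u - g s ∈ XSeq X m := by
      apply hVm
      show f (u - g s) ∈ V
      rw [map_sub]
      have : f u - f (g s) = (f u - s) - (f (g s) - s) := by abel
      rw [this]
      exact hW₂sub _ (interior_subset hsW) _ hgs
    obtain ⟨fm, hfm, x, hx, hfx⟩ := Set.mem_add.1 (hFm hdiff)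
    refine Set.mem_add.2 ⟨g s + fm, Set.add_mem_add ⟨s, hst, rfl⟩ hfm, x, hx, ?_⟩
    rw [show (g s : R) + fm + x = g s + (fm + x) from by abel, hfx]; abel
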